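/- Let q ∈ k, q ≠ 0, and let M = H_n(q) ⊗_{H_λ} k(χ) be the H_n(q)-module induced from a 1-dimensional representation χ of a parabolic subalgebra H_λ, with standard basis {v_σ = T_σ·c : σ ∈ D_λ} indexed by distinguished coset representatives. Then for each i, the kernel of (T_i - q) acting on M is spanned by the elements v_{τ_iσ} + v_σ for σ ∈ A_i(λ) together with the elements v_σ for σ ∈ B_i(λ) with χ_σ(T_i) = q, where A_i(λ) = {σ ∈ D_λ : τ_iσ ∈ D_λ, τ_iσ > σ} and B_i(λ) = {σ ∈ D_λ : σ^{-1}τ_iσ ∈ B_λ}, and χ_σ(T_i) = χ(T_{σ^{-1}(i)}). -/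

import Mathlib

noncomputable section
open Classical

variable (k : Type) [Field k] (N : ℕ)

/-- The basic transposition `τ_i = (i, i+1)` in `S_{N+1}`. -/
def tau (i : Fin N) : Equiv.Perm (Fin (N + 1)) := Equiv.swap i.castSucc i.succ

/-- The Coxeter length of a permutation. -/
def len (σ : Equiv.Perm (Fin (N + 1))) : ℕ :=
  sInf {m | ∃ l : List (Fin N), l.length = m ∧ (l.map (tau N)).prod = σ}

/-- The Young subgroup `S_λ` generated by the basic transpositions indexed by `B`. -/
def youngSubgroup (B : Set (Fin N)) : Subgroup (Equiv.Perm (Fin (N + 1))) :=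
  Subgroup.closure (tau N '' B)

/-- `σ` is a distinguished (minimal length) left coset representative of `σ S_λ`. -/
def IsDistL (B : Set (Fin N)) (σ : Equiv.Perm (Fin (N + 1))) : Prop :=
  ∀ s ∈ youngSubgroup N B, len N σ ≤ len N (σ * s)

/-- The set `D_λ` of distinguished left coset representatives. -/
def Dset (B : Set (Fin N)) : Type := {σ : Equiv.Perm (Fin (N + 1)) // IsDistL N B σ}

/-- `χ : Fin N → k` restricted to `B` defines a one-dimensional representation of
the parabolic subalgebra `H_λ`: the values satisfy the quadratic relation and are
compatible with the braid relations. -/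
def IsOneDimRep (q : k) (B : Set (Fin N)) (χ : Fin N → k) : Prop :=
  (∀ i ∈ B, (χ i - q) * (χ i + 1) = 0) ∧
  (∀ i ∈ B, ∀ j ∈ B, ((i : ℕ) + 1 = j ∨ (j : ℕ) + 1 = i) →
    χ i * χ j * χ i = χ j * χ i * χ j)

/-- The underlying vector space of the induced module `H_n(q) ⊗_{H_λ} k(χ)`,
with standard basis `{T_σ c : σ ∈ D_λ}` indexed by distinguished coset
representatives. -/
def IndM (B : Set (Fin N)) : Type := Dset N B →₀ k

instance (B : Set (Fin N)) : AddCommGroup (IndM k N B) :=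
  inferInstanceAs (AddCommGroup (Dset N B →₀ k))

instance (B : Set (Fin N)) : Module k (IndM k N B) :=
  inferInstanceAs (Module k (Dset N B →₀ k))

/-- The action of the generator `T_i` on the standard basis vector `v_σ` of the
induced module `H_n(q) ⊗_{H_λ} k(χ)`:
`T_i v_σ = v_{τ_iσ}` if `σ ∈ A_i(λ)`;
`T_i v_σ = (q-1) v_σ + q v_{τ_iσ}` if `τ_i σ ∈ A_i(λ)`, `τ_iσ < σ`;
`T_i v_σ = χ_σ(T_i) v_σ = χ(T_j) v_σ` with `τ_j = σ⁻¹τ_iσ ∈ B_λ` if `σ ∈ B_i(λ)`. -/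
def indAct (q : k) (B : Set (Fin N)) (χ : Fin N → k) (i : Fin N) (σ : Dset N B) :
    IndM k N B :=
  if h : ∃ j, j ∈ B ∧ σ.1⁻¹ * tau N i * σ.1 = tau N j then
    χ h.choose • Finsupp.single σ 1
  else if hD : IsDistL N B (tau N i * σ.1) then
    (if len N σ.1 < len N (tau N i * σ.1) then
      Finsupp.single ⟨tau N i * σ.1, hD⟩ 1
    else
      (q - 1) • Finsupp.single σ 1 + q • Finsupp.single ⟨tau N i * σ.1, hD⟩ 1)
  else 0

/-- The operator by which the generator `T_i` acts on the induced module
`H_n(q) ⊗_{H_λ} k(χ)`. -/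
def indT (q : k) (B : Set (Fin N)) (χ : Fin N → k) (i : Fin N) :
    Module.End k (IndM k N B) :=
  (Finsupp.lift (IndM k N B) k (Dset N B)) (indAct k N q B χ i)


section Aux

variable {k : Type} [Field k] {N : ℕ}

lemma tau_mul_self (i : Fin N) : tau N i * tau N i = 1 := Equiv.swap_mul_self _ _

lemma tau_inv (i : Fin N) : (tau N i)⁻¹ = tau N i := by
  rw [eq_comm, eq_inv_iff_mul_eq_one, tau_mul_self]

lemma tau_mul_cancel (i : Fin N) (x : Equiv.Perm (Fin (N + 1))) :
    tau N i * (tau N i * x) = x := by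
  rw [← mul_assoc, tau_mul_self, one_mul]

lemma sign_tau (i : Fin N) : Equiv.Perm.sign (tau N i) = -1 :=
  Equiv.Perm.sign_swap (Fin.castSucc_lt_succ : i.castSucc < i.succ).ne

lemma tau_ne_one (i : Fin N) : tau N i ≠ 1 := by
  intro h
  have := sign_tau i
  rw [h, map_one] at this
  exact absurd this (by decide)

lemma tau_mul_ne (i : Fin N) (σ : Equiv.Perm (Fin (N + 1))) : tau N i * σ ≠ σ := by
  intro h
  exact tau_ne_one i (mul_right_cancel (by rw [h, one_mul]))

lemma tau_inj {i j : Fin N} (h : tau N i = tau N j) : i = j := by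
  have h1 : tau N j i.castSucc = i.succ := by
    rw [← h]; exact Equiv.swap_apply_left _ _
  unfold tau at h1
  rw [Equiv.swap_apply_def] at h1
  split_ifs at h1 with h2 h3 <;>
    simp only [Fin.ext_iff, Fin.coe_castSucc, Fin.val_succ] at * <;> omega

lemma conj_tau (i : Fin N) (σ : Equiv.Perm (Fin (N + 1))) :
    (tau N i * σ)⁻¹ * tau N i * (tau N i * σ) = σ⁻¹ * tau N i * σ := by
  rw [mul_inv_rev, tau_inv]
  simp only [mul_assoc, tau_mul_cancel]

lemma exists_word (σ : Equiv.Perm (Fin (N + 1))) :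
    ∃ l : List (Fin N), (l.map (tau N)).prod = σ := by
  have hmem : σ ∈ Submonoid.closure
      (Set.range fun i : Fin N => Equiv.swap (Fin.castSucc i) i.succ) := by
    rw [Equiv.Perm.mclosure_swap_castSucc_succ]; trivial
  obtain ⟨l, hl, hprod⟩ := Submonoid.exists_list_of_mem_closure hmem
  suffices h : ∀ l' : List (Equiv.Perm (Fin (N + 1))),
      (∀ y ∈ l', ∃ i : Fin N, tau N i = y) → ∃ m : List (Fin N), m.map (tau N) = l' by
    obtain ⟨m, hm⟩ := h l (fun y hy => by
      obtain ⟨i, hi⟩ := hl y hy; exact ⟨i, hi⟩)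
    exact ⟨m, by rw [hm, hprod]⟩
  intro l'
  induction l' with
  | nil => exact fun _ => ⟨[], rfl⟩
  | cons a t ih =>
    intro hmem'
    obtain ⟨i, hi⟩ := hmem' a List.mem_cons_self
    obtain ⟨m, hm⟩ := ih (fun y hy => hmem' y (List.mem_cons_of_mem a hy))
    exact ⟨i :: m, by simp [hm, hi]⟩

lemma len_spec (σ : Equiv.Perm (Fin (N + 1))) :
    ∃ l : List (Fin N), l.length = len N σ ∧ (l.map (tau N)).prod = σ := by
  have hne : {m | ∃ l : List (Fin N), l.length = m ∧ (l.map (tau N)).prod = σ}.Nonempty := by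
    obtain ⟨l, hl⟩ := exists_word σ
    exact ⟨l.length, l, rfl, hl⟩
  have := Nat.sInf_mem hne
  obtain ⟨l, hl1, hl2⟩ := this
  exact ⟨l, hl1, hl2⟩

lemma neg_one_pow_list (l : List (Fin N)) :
    (l.map fun _ => (-1 : ℤˣ)).prod = (-1) ^ l.length := by
  induction l with
  | nil => rfl
  | cons a t ih => simp [ih, pow_succ, mul_comm]

lemma sign_len (σ : Equiv.Perm (Fin (N + 1))) :
    Equiv.Perm.sign σ = (-1) ^ len N σ := by
  obtain ⟨l, hlen, hprod⟩ := len_spec σ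
  have hc : (Equiv.Perm.sign ∘ tau N) = fun _ : Fin N => (-1 : ℤˣ) := by
    funext i; exact sign_tau i
  have key : Equiv.Perm.sign ((l.map (tau N)).prod) = (-1) ^ l.length := by
    rw [map_list_prod, List.map_map, hc, neg_one_pow_list]
  rw [hlen] at key
  conv_lhs => rw [← hprod]
  exact key

lemma len_ne (i : Fin N) (σ : Equiv.Perm (Fin (N + 1))) :
    len N (tau N i * σ) ≠ len N σ := by
  intro h
  have h1 : Equiv.Perm.sign (tau N i * σ) = Equiv.Perm.sign σ := by
    rw [sign_len, sign_len, h]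
  rw [map_mul, sign_tau] at h1
  rcases Int.units_eq_one_or (Equiv.Perm.sign σ) with h3 | h3 <;> rw [h3] at h1 <;>
    exact absurd h1 (by decide)

lemma mem_young {B : Set (Fin N)} {j : Fin N} (hj : j ∈ B) :
    tau N j ∈ youngSubgroup N B :=
  Subgroup.subset_closure ⟨j, hj, rfl⟩

/-- If `τ_iσ` is distinguished and longer than `σ`, then `σ` is not of B-type. -/
lemma not_Btype {B : Set (Fin N)} {i : Fin N} {σ : Equiv.Perm (Fin (N + 1))}
    (hD : IsDistL N B (tau N i * σ)) (hlt : len N σ < len N (tau N i * σ)) :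
    ¬∃ j, j ∈ B ∧ σ⁻¹ * tau N i * σ = tau N j := by
  rintro ⟨j, hj, hconj⟩
  have hτσ : tau N i * σ = σ * tau N j := by rw [← hconj]; group
  have h1 := hD (tau N j) (mem_young hj)
  have h2 : tau N i * σ * tau N j = σ := by
    rw [hτσ, mul_assoc, tau_mul_self, mul_one]
  rw [h2] at h1
  omega

end Aux

section Aux2

variable {k : Type} [Field k] {N : ℕ}

lemma indAct_B (q : k) (B : Set (Fin N)) (χ : Fin N → k) (i : Fin N) (σ : Dset N B)
    {j : Fin N} (hj : j ∈ B) (hconj : σ.1⁻¹ * tau N i * σ.1 = tau N j) :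
    indAct k N q B χ i σ = χ j • Finsupp.single σ 1 := by
  have h : ∃ j, j ∈ B ∧ σ.1⁻¹ * tau N i * σ.1 = tau N j := ⟨j, hj, hconj⟩
  rw [indAct, dif_pos h]
  have h3 : tau N h.choose = tau N j := (h.choose_spec.2).symm.trans hconj
  exact congrArg (fun c => c • Finsupp.single σ 1) (congrArg χ (tau_inj h3))

lemma indAct_up (q : k) (B : Set (Fin N)) (χ : Fin N → k) (i : Fin N) (σ : Dset N B)
    (hB : ¬∃ j, j ∈ B ∧ σ.1⁻¹ * tau N i * σ.1 = tau N j)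
    (hD : IsDistL N B (tau N i * σ.1)) (hlt : len N σ.1 < len N (tau N i * σ.1)) :
    indAct k N q B χ i σ = Finsupp.single ⟨tau N i * σ.1, hD⟩ 1 := by
  erw [indAct, dif_neg hB, dif_pos hD, if_pos hlt]

lemma indAct_down (q : k) (B : Set (Fin N)) (χ : Fin N → k) (i : Fin N) (σ : Dset N B)
    (hB : ¬∃ j, j ∈ B ∧ σ.1⁻¹ * tau N i * σ.1 = tau N j)
    (hD : IsDistL N B (tau N i * σ.1)) (hnlt : ¬ len N σ.1 < len N (tau N i * σ.1)) :
    indAct k N q B χ i σ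
      = (q - 1) • Finsupp.single σ 1 + q • Finsupp.single ⟨tau N i * σ.1, hD⟩ 1 := by
  erw [indAct, dif_neg hB, dif_pos hD, if_neg hnlt]

lemma indAct_zero (q : k) (B : Set (Fin N)) (χ : Fin N → k) (i : Fin N) (σ : Dset N B)
    (hB : ¬∃ j, j ∈ B ∧ σ.1⁻¹ * tau N i * σ.1 = tau N j)
    (hD : ¬ IsDistL N B (tau N i * σ.1)) :
    indAct k N q B χ i σ = 0 := by
  rw [indAct, dif_neg hB, dif_neg hD]

/-- Identity conversion from the induced module to its underlying `Finsupp` type. -/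
abbrev toF {B : Set (Fin N)} (v : IndM k N B) : Dset N B →₀ k := v

lemma indAct_apply_ne (q : k) (B : Set (Fin N)) (χ : Fin N → k) (i : Fin N)
    (σ ρ : Dset N B) (h1 : ρ ≠ σ) (h2 : ρ.1 ≠ tau N i * σ.1) :
    toF (indAct k N q B χ i σ) ρ = 0 := by
  have e1 : (Finsupp.single σ (1:k)) ρ = 0 := Finsupp.single_eq_of_ne' (Ne.symm h1)
  have e2 : ∀ hD : IsDistL N B (tau N i * σ.1),
      (Finsupp.single ⟨tau N i * σ.1, hD⟩ (1:k) : Dset N B →₀ k) ρ = 0 := fun hD =>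
    Finsupp.single_eq_of_ne' (fun hh => h2 (by rw [← hh]))
  by_cases h : ∃ j, j ∈ B ∧ σ.1⁻¹ * tau N i * σ.1 = tau N j
  · obtain ⟨j, hj, hc⟩ := h
    rw [indAct_B q B χ i σ hj hc]
    show (χ j • Finsupp.single σ (1:k)) ρ = 0
    rw [Finsupp.smul_apply, e1, smul_zero]
  · by_cases hD : IsDistL N B (tau N i * σ.1)
    · by_cases hlt : len N σ.1 < len N (tau N i * σ.1)
      · rw [indAct_up q B χ i σ h hD hlt]
        exact e2 hD
      · rw [indAct_down q B χ i σ h hD hlt]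
        show ((q - 1) • Finsupp.single σ (1:k)
          + q • (Finsupp.single ⟨tau N i * σ.1, hD⟩ 1 : Dset N B →₀ k)
          : Dset N B →₀ k) ρ = 0
        rw [Finsupp.add_apply, Finsupp.smul_apply, Finsupp.smul_apply, e1, e2 hD,
          smul_zero, smul_zero, add_zero]
    · rw [indAct_zero q B χ i σ h hD]
      rfl

lemma indT_single (q : k) (B : Set (Fin N)) (χ : Fin N → k) (i : Fin N)
    (σ : Dset N B) (c : k) :
    indT k N q B χ i (Finsupp.single σ c) = c • indAct k N q B χ i σ := by
  show (Finsupp.single σ c).sum (fun x r => r • indAct k N q B χ i x)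
    = c • indAct k N q B χ i σ
  exact Finsupp.sum_single_index (zero_smul _ _)

lemma indT_apply (q : k) (B : Set (Fin N)) (χ : Fin N → k) (i : Fin N)
    (v : Dset N B →₀ k) (ρ : Dset N B) :
    toF (indT k N q B χ i v) ρ
      = ∑ σ ∈ v.support, v σ * toF (indAct k N q B χ i σ) ρ := by
  have h0 : toF (indT k N q B χ i v)
      = v.sum fun σ r => r • toF (indAct k N q B χ i σ) := rfl
  rw [h0, Finsupp.sum_apply, Finsupp.sum]
  exact Finset.sum_congr rfl (fun σ _ => by rw [Finsupp.smul_apply, smul_eq_mul])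

lemma sum_one {X : Type} (s : Finset X) (f : X → k) (ρ : X)
    (h0 : ∀ σ ∈ s, σ ≠ ρ → f σ = 0) (hρ : ρ ∉ s → f ρ = 0) :
    ∑ σ ∈ s, f σ = f ρ := by
  classical
  by_cases hm : ρ ∈ s
  · rw [← Finset.sum_subset (Finset.singleton_subset_iff.mpr hm)
      (fun x hx hxn => h0 x hx (by simpa using hxn))]
    exact Finset.sum_singleton _ _
  · rw [hρ hm]
    exact Finset.sum_eq_zero fun σ hσ => h0 σ hσ (fun h => hm (h ▸ hσ))

lemma sum_two {X : Type} (s : Finset X) (f : X → k) (ρ t : X) (hne : ρ ≠ t)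
    (h0 : ∀ σ ∈ s, σ ≠ ρ → σ ≠ t → f σ = 0) (hρ : ρ ∉ s → f ρ = 0)
    (ht : t ∉ s → f t = 0) :
    ∑ σ ∈ s, f σ = f ρ + f t := by
  classical
  have e1 : ∑ σ ∈ s, f σ = ∑ σ ∈ s ∪ {ρ, t}, f σ := by
    apply Finset.sum_subset Finset.subset_union_left
    intro x hx hxs
    have hx2 : x ∈ ({ρ, t} : Finset X) := by
      rcases Finset.mem_union.mp hx with h | h
      · exact absurd h hxs
      · exact h
    rcases Finset.mem_insert.mp hx2 with h | h
    · subst h; exact hρ hxs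
    · rw [Finset.mem_singleton] at h; subst h; exact ht hxs
  have e2 : ∑ σ ∈ ({ρ, t} : Finset X), f σ = ∑ σ ∈ s ∪ {ρ, t}, f σ := by
    apply Finset.sum_subset Finset.subset_union_right
    intro x hx hx2
    have hxρ : x ≠ ρ := fun h => hx2 (by rw [h]; exact Finset.mem_insert_self _ _)
    have hxt : x ≠ t := fun h => hx2 (by
      rw [h]; exact Finset.mem_insert_of_mem (Finset.mem_singleton_self _))
    rcases Finset.mem_union.mp hx with h | h
    · exact h0 x h hxρ hxt
    · exact absurd h hx2
  rw [e1, ← e2, Finset.sum_pair hne]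

lemma genA_ker (q : k) (B : Set (Fin N)) (χ : Fin N → k) (i : Fin N) (σ : Dset N B)
    (hD : IsDistL N B (tau N i * σ.1))
    (hlt : len N σ.1 < len N (tau N i * σ.1)) :
    (indT k N q B χ i - q • 1)
      (((Finsupp.single ⟨tau N i * σ.1, hD⟩ 1 : Dset N B →₀ k) + Finsupp.single σ 1
        : IndM k N B)) = 0 := by
  set t : Dset N B := ⟨tau N i * σ.1, hD⟩ with ht
  have hB : ¬∃ j, j ∈ B ∧ σ.1⁻¹ * tau N i * σ.1 = tau N j := not_Btype hD hlt
  have hBt : ¬∃ j, j ∈ B ∧ t.1⁻¹ * tau N i * t.1 = tau N j := by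
    rintro ⟨j, hj, hc⟩
    exact hB ⟨j, hj, by rw [← conj_tau i σ.1]; exact hc⟩
  have hDt : IsDistL N B (tau N i * t.1) := by
    show IsDistL N B (tau N i * (tau N i * σ.1))
    rw [tau_mul_cancel]; exact σ.2
  have hnlt : ¬ len N t.1 < len N (tau N i * t.1) := by
    show ¬ len N (tau N i * σ.1) < len N (tau N i * (tau N i * σ.1))
    rw [tau_mul_cancel]; omega
  have hsig : (⟨tau N i * t.1, hDt⟩ : Dset N B) = σ := Subtype.ext (tau_mul_cancel i σ.1)
  have h1 : indT k N q B χ i (Finsupp.single σ (1:k)) = Finsupp.single t 1 := by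
    rw [indT_single, one_smul, indAct_up q B χ i σ hB hD hlt]
  have h2 : indT k N q B χ i (Finsupp.single t (1:k))
      = (q - 1) • Finsupp.single t 1 + q • Finsupp.single σ 1 := by
    rw [indT_single, one_smul, indAct_down q B χ i t hBt hDt hnlt, hsig]
  erw [LinearMap.sub_apply, map_add, h1, h2, LinearMap.smul_apply, Module.End.one_apply]
  have hm : (q - 1) • (Finsupp.single t 1 : Dset N B →₀ k) + q • (Finsupp.single σ 1 : Dset N B →₀ k)
      + (Finsupp.single t 1 : Dset N B →₀ k)
      - q • ((Finsupp.single t 1 : Dset N B →₀ k) + (Finsupp.single σ 1 : Dset N B →₀ k)) = 0 := by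
    module
  exact hm

lemma genB_ker (q : k) (B : Set (Fin N)) (χ : Fin N → k) (i : Fin N) (σ : Dset N B)
    {j : Fin N} (hj : j ∈ B) (hconj : σ.1⁻¹ * tau N i * σ.1 = tau N j) (hqj : χ j = q) :
    (indT k N q B χ i - q • 1) (Finsupp.single σ (1:k)) = 0 := by
  have e : indT k N q B χ i (Finsupp.single σ (1:k)) = q • Finsupp.single σ 1 := by
    rw [indT_single, one_smul, indAct_B q B χ i σ hj hconj, hqj]
  exact sub_eq_zero.mpr e

lemma support_sub_subset (v w : Dset N B →₀ k) (ρ : Dset N B)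
    (h1 : (v - w) ρ = 0) (h2 : ∀ x, x ≠ ρ → v x = 0 → (v - w) x = 0) :
    (v - w).support ⊆ v.support.erase ρ := by
  intro x hx
  rw [Finsupp.mem_support_iff] at hx
  rw [Finset.mem_erase, Finsupp.mem_support_iff]
  by_cases hxρ : x = ρ
  · subst hxρ; exact absurd h1 hx
  · exact ⟨hxρ, fun h => hx (h2 x hxρ h)⟩

lemma step {B : Set (Fin N)} {S : Set (IndM k N B)} {T : Module.End k (IndM k N B)} {n : ℕ}
    (ih : ∀ w : Dset N B →₀ k, w.support.card ≤ n → T w = 0 →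
      w ∈ Submodule.span k S)
    (v g : Dset N B →₀ k) (ρ : Dset N B) (hρ : ρ ∈ v.support)
    (hker : T v = 0) (hgker : T g = 0) (hgspan : g ∈ S)
    (hsub : (v - v ρ • g).support ⊆ v.support.erase ρ)
    (hcard : v.support.card ≤ n + 1) :
    v ∈ Submodule.span k S := by
  have hker' : T (v - v ρ • g) = 0 := by
    erw [map_sub, map_smul, hker, hgker, smul_zero, sub_zero]
  have hcard' : (v - v ρ • g).support.card ≤ n := by
    have hc1 := Finset.card_le_card hsub
    have hc2 := Finset.card_erase_of_mem hρ
    omega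
  have hmem := ih _ hcard' hker'
  have hv : v = (v - v ρ • g) + v ρ • g := by abel
  rw [hv]
  exact Submodule.add_mem _ hmem (Submodule.smul_mem (Submodule.span k S) (v ρ) (Submodule.subset_span hgspan))

end Aux2


section Aux3

variable {k : Type} [Field k] {N : ℕ}

lemma single_apply_eq' {B : Set (Fin N)} (a b : Dset N B) (c : k) (h : a.1 = b.1) :
    (Finsupp.single a c : Dset N B →₀ k) b = c := by
  have hab : a = b := Subtype.ext h
  rw [hab, Finsupp.single_eq_same]

lemma single_apply_ne' {B : Set (Fin N)} (a b : Dset N B) (c : k) (h : a.1 ≠ b.1) :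
    (Finsupp.single a c : Dset N B →₀ k) b = 0 :=
  Finsupp.single_eq_of_ne' (fun hh => h (congrArg Subtype.val hh))

/-- The generating set of the kernel. -/
def genSet (q : k) (B : Set (Fin N)) (χ : Fin N → k) (i : Fin N) : Set (IndM k N B) :=
  {v : IndM k N B | ∃ (σ : Dset N B) (h : IsDistL N B (tau N i * σ.1)),
      len N σ.1 < len N (tau N i * σ.1) ∧
      v = Finsupp.single ⟨tau N i * σ.1, h⟩ 1 + Finsupp.single σ 1} ∪
  {v : IndM k N B | ∃ (σ : Dset N B) (j : Fin N), j ∈ B ∧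
      σ.1⁻¹ * tau N i * σ.1 = tau N j ∧ χ j = q ∧ v = Finsupp.single σ 1}

lemma ker_le_span_aux (q : k) (hq : q ≠ 0) (B : Set (Fin N)) (χ : Fin N → k) (i : Fin N) :
    ∀ n (v : Dset N B →₀ k), v.support.card ≤ n →
      (indT k N q B χ i - q • 1) v = 0 →
      v ∈ Submodule.span k (genSet q B χ i) := by
  intro n
  induction n with
  | zero =>
    intro v hcard _
    have h0 : v = 0 :=
      Finsupp.support_eq_empty.mp (Finset.card_eq_zero.mp (Nat.le_zero.mp hcard))
    exact h0 ▸ Submodule.zero_mem _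
  | succ n ih =>
    intro v hcard hker
    rcases Finset.eq_empty_or_nonempty v.support with hs | ⟨ρ, hρ⟩
    · exact (Finsupp.support_eq_empty.mp hs) ▸ Submodule.zero_mem _
    have hvρ : v ρ ≠ 0 := Finsupp.mem_support_iff.mp hρ
    have hTv : indT k N q B χ i v = q • v := by
      exact sub_eq_zero.mp hker
    have key : ∀ ξ : Dset N B,
        ∑ σ ∈ v.support, v σ * toF (indAct k N q B χ i σ) ξ = q * v ξ := by
      intro ξ
      rw [← indT_apply q B χ i v ξ, hTv]
      show (q • v : Dset N B →₀ k) ξ = q * v ξ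
      rw [Finsupp.smul_apply, smul_eq_mul]
    by_cases hBtype : ∃ j, j ∈ B ∧ ρ.1⁻¹ * tau N i * ρ.1 = tau N j
    · -- B-type basis vector
      obtain ⟨j, hj, hconj⟩ := hBtype
      have hvan : ∀ σ ∈ v.support, σ ≠ ρ → v σ * toF (indAct k N q B χ i σ) ρ = 0 := by
        intro σ _ hne
        by_cases hρτ : ρ.1 = tau N i * σ.1
        · have hσ1 : σ.1 = tau N i * ρ.1 := by rw [hρτ, tau_mul_cancel]
          have hconjσ : σ.1⁻¹ * tau N i * σ.1 = tau N j := by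
            rw [hσ1, conj_tau]; exact hconj
          erw [indAct_B q B χ i σ hj hconjσ, Finsupp.smul_apply,
            Finsupp.single_eq_of_ne' hne, smul_zero, mul_zero]
        · rw [indAct_apply_ne q B χ i σ ρ (Ne.symm hne) hρτ, mul_zero]
      have hWρρ : toF (indAct k N q B χ i ρ) ρ = χ j := by
        erw [indAct_B q B χ i ρ hj hconj, Finsupp.smul_apply, Finsupp.single_eq_same,
          smul_eq_mul, mul_one]
      have heq : v ρ * χ j = q * v ρ := by
        have h := key ρ
        rw [sum_one v.support _ ρ hvan (fun hc => absurd hρ hc), hWρρ] at h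
        exact h
      have hχq : χ j = q := by
        have h0 : (χ j - q) * v ρ = 0 := by linear_combination heq
        rcases mul_eq_zero.mp h0 with h1 | h1
        · exact sub_eq_zero.mp h1
        · exact absurd h1 hvρ
      refine step ih v (Finsupp.single ρ 1) ρ hρ hker
        (genB_ker q B χ i ρ hj hconj hχq) (Or.inr ⟨ρ, j, hj, hconj, hχq, rfl⟩) ?_ hcard
      apply support_sub_subset
      · rw [Finsupp.sub_apply, Finsupp.smul_apply, Finsupp.single_eq_same,
          smul_eq_mul, mul_one, sub_self]
      · intro x hxρ hvx
        rw [Finsupp.sub_apply, hvx, Finsupp.smul_apply,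
          Finsupp.single_eq_of_ne' (Ne.symm hxρ), smul_zero, sub_zero]
    · by_cases hD : IsDistL N B (tau N i * ρ.1)
      · -- paired basis vectors
        have hnet : ρ ≠ (⟨tau N i * ρ.1, hD⟩ : Dset N B) := fun h =>
          tau_mul_ne i ρ.1 (congrArg Subtype.val h).symm
        have hBt : ¬∃ j, j ∈ B ∧
            (⟨tau N i * ρ.1, hD⟩ : Dset N B).1⁻¹ * tau N i
              * (⟨tau N i * ρ.1, hD⟩ : Dset N B).1 = tau N j := by
          rintro ⟨j, hj, hc⟩
          refine hBtype ⟨j, hj, ?_⟩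
          rw [← conj_tau i ρ.1]; exact hc
        have hDt : IsDistL N B (tau N i * (⟨tau N i * ρ.1, hD⟩ : Dset N B).1) := by
          show IsDistL N B (tau N i * (tau N i * ρ.1))
          rw [tau_mul_cancel]; exact ρ.2
        have htt : (⟨tau N i * (⟨tau N i * ρ.1, hD⟩ : Dset N B).1, hDt⟩ : Dset N B) = ρ :=
          Subtype.ext (tau_mul_cancel i ρ.1)
        have hρτne : ∀ σ : Dset N B, σ ≠ ρ →
            (⟨tau N i * ρ.1, hD⟩ : Dset N B).1 = tau N i * σ.1 → False := by
          intro σ hne hc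
          exact hne (Subtype.ext (mul_left_cancel hc).symm)
        rcases lt_or_gt_of_ne (len_ne i ρ.1) with hlt2 | hgt
        · -- II.b : len (τρ) < len ρ ; the partner is shorter
          have hltt : len N (⟨tau N i * ρ.1, hD⟩ : Dset N B).1
              < len N (tau N i * (⟨tau N i * ρ.1, hD⟩ : Dset N B).1) := by
            show len N (tau N i * ρ.1) < len N (tau N i * (tau N i * ρ.1))
            rw [tau_mul_cancel]; exact hlt2
          have hWtt : toF (indAct k N q B χ i ⟨tau N i * ρ.1, hD⟩)
              (⟨tau N i * ρ.1, hD⟩ : Dset N B) = 0 := by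
            have e := indAct_up q B χ i ⟨tau N i * ρ.1, hD⟩ hBt hDt hltt
            rw [htt] at e
            rw [e]
            exact single_apply_ne' ρ ⟨tau N i * ρ.1, hD⟩ 1
              (fun h => tau_mul_ne i ρ.1 h.symm)
          have hnltρ : ¬ len N ρ.1 < len N (tau N i * ρ.1) := by omega
          have hWρt : toF (indAct k N q B χ i ρ) (⟨tau N i * ρ.1, hD⟩ : Dset N B) = q := by
            erw [indAct_down q B χ i ρ hBtype hD hnltρ, Finsupp.add_apply,
              Finsupp.smul_apply, Finsupp.smul_apply,
              single_apply_ne' ρ ⟨tau N i * ρ.1, hD⟩ 1 (fun h => tau_mul_ne i ρ.1 h.symm),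
              single_apply_eq' ⟨tau N i * ρ.1, hD⟩ ⟨tau N i * ρ.1, hD⟩ 1 rfl,
              smul_zero, smul_eq_mul, mul_one, zero_add]
          have hvan : ∀ σ ∈ v.support, σ ≠ (⟨tau N i * ρ.1, hD⟩ : Dset N B) → σ ≠ ρ →
              v σ * toF (indAct k N q B χ i σ) (⟨tau N i * ρ.1, hD⟩ : Dset N B) = 0 := by
            intro σ _ h1 h2
            by_cases hc : (⟨tau N i * ρ.1, hD⟩ : Dset N B).1 = tau N i * σ.1
            · exact absurd (hρτne σ h2 hc) not_false
            · rw [indAct_apply_ne q B χ i σ ⟨tau N i * ρ.1, hD⟩ (Ne.symm h1) hc, mul_zero]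
          have heq := key ⟨tau N i * ρ.1, hD⟩
          rw [sum_two v.support _ (⟨tau N i * ρ.1, hD⟩ : Dset N B) ρ (Ne.symm hnet) hvan
            (fun h => by rw [Finsupp.notMem_support_iff.mp h, zero_mul])
            (fun h => absurd hρ h), hWtt, hWρt, mul_zero, zero_add] at heq
          have hvt : v ρ = v ⟨tau N i * ρ.1, hD⟩ :=
            mul_right_cancel₀ hq (heq.trans (mul_comm q _))
          have hgker : (indT k N q B χ i - q • 1)
              (Finsupp.single ρ 1 + (Finsupp.single ⟨tau N i * ρ.1, hD⟩ 1 : Dset N B →₀ k))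
                = 0 := by
            have e := genA_ker q B χ i ⟨tau N i * ρ.1, hD⟩ hDt hltt
            rw [htt] at e
            exact e
          refine step ih v
            (Finsupp.single ρ 1 + (Finsupp.single ⟨tau N i * ρ.1, hD⟩ 1 : Dset N B →₀ k))
            ρ hρ hker hgker (Or.inl ⟨⟨tau N i * ρ.1, hD⟩, hDt, hltt, by rw [htt]; rfl⟩)
            ?_ hcard
          apply support_sub_subset
          · rw [Finsupp.sub_apply, Finsupp.smul_apply, Finsupp.add_apply,
              Finsupp.single_eq_same,
              single_apply_ne' ⟨tau N i * ρ.1, hD⟩ ρ 1 (fun h => tau_mul_ne i ρ.1 h),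
              add_zero, smul_eq_mul, mul_one, sub_self]
          · intro x hxρ hvx
            by_cases hxt : x = (⟨tau N i * ρ.1, hD⟩ : Dset N B)
            · subst hxt
              have : v ρ = 0 := by rw [hvt]; exact hvx
              exact absurd this hvρ
            · rw [Finsupp.sub_apply, hvx, Finsupp.smul_apply, Finsupp.add_apply,
                Finsupp.single_eq_of_ne' (Ne.symm hxρ),
                Finsupp.single_eq_of_ne' (Ne.symm hxt), add_zero, smul_zero, sub_zero]
        · -- II.a : len ρ < len (τρ) ; the partner is longer
          have hlt : len N ρ.1 < len N (tau N i * ρ.1) := hgt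
          have hnltt : ¬ len N (⟨tau N i * ρ.1, hD⟩ : Dset N B).1
              < len N (tau N i * (⟨tau N i * ρ.1, hD⟩ : Dset N B).1) := by
            show ¬ len N (tau N i * ρ.1) < len N (tau N i * (tau N i * ρ.1))
            rw [tau_mul_cancel]; omega
          have hWρρ : toF (indAct k N q B χ i ρ) ρ = 0 := by
            rw [indAct_up q B χ i ρ hBtype hD hlt]
            exact single_apply_ne' ⟨tau N i * ρ.1, hD⟩ ρ 1 (fun h => tau_mul_ne i ρ.1 h)
          have hWtρ : toF (indAct k N q B χ i ⟨tau N i * ρ.1, hD⟩) ρ = q := by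
            have e := indAct_down q B χ i ⟨tau N i * ρ.1, hD⟩ hBt hDt hnltt
            rw [htt] at e
            erw [e, Finsupp.add_apply, Finsupp.smul_apply, Finsupp.smul_apply,
              single_apply_ne' ⟨tau N i * ρ.1, hD⟩ ρ 1 (fun h => tau_mul_ne i ρ.1 h),
              Finsupp.single_eq_same, smul_zero, smul_eq_mul, mul_one, zero_add]
          have hvan : ∀ σ ∈ v.support, σ ≠ ρ → σ ≠ (⟨tau N i * ρ.1, hD⟩ : Dset N B) →
              v σ * toF (indAct k N q B χ i σ) ρ = 0 := by
            intro σ _ h1 h2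
            by_cases hc : ρ.1 = tau N i * σ.1
            · refine absurd (h2 (Subtype.ext ?_)) not_false
              show σ.1 = tau N i * ρ.1
              rw [hc, tau_mul_cancel]
            · rw [indAct_apply_ne q B χ i σ ρ (Ne.symm h1) hc, mul_zero]
          have heq := key ρ
          rw [sum_two v.support _ ρ (⟨tau N i * ρ.1, hD⟩ : Dset N B) hnet hvan
            (fun h => absurd hρ h)
            (fun h => by rw [Finsupp.notMem_support_iff.mp h, zero_mul]),
            hWρρ, hWtρ, mul_zero, zero_add] at heq
          have hvt : v ⟨tau N i * ρ.1, hD⟩ = v ρ :=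
            mul_right_cancel₀ hq (heq.trans (mul_comm q _))
          refine step ih v
            ((Finsupp.single ⟨tau N i * ρ.1, hD⟩ 1 : Dset N B →₀ k) + Finsupp.single ρ 1)
            ρ hρ hker (genA_ker q B χ i ρ hD hlt) (Or.inl ⟨ρ, hD, hlt, rfl⟩)
            ?_ hcard
          apply support_sub_subset
          · rw [Finsupp.sub_apply, Finsupp.smul_apply, Finsupp.add_apply,
              Finsupp.single_eq_same,
              single_apply_ne' ⟨tau N i * ρ.1, hD⟩ ρ 1 (fun h => tau_mul_ne i ρ.1 h),
              zero_add, smul_eq_mul, mul_one, sub_self]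
          · intro x hxρ hvx
            by_cases hxt : x = (⟨tau N i * ρ.1, hD⟩ : Dset N B)
            · subst hxt
              have : v ρ = 0 := by rw [← hvt]; exact hvx
              exact absurd this hvρ
            · rw [Finsupp.sub_apply, hvx, Finsupp.smul_apply, Finsupp.add_apply,
                Finsupp.single_eq_of_ne' (Ne.symm hxt),
                Finsupp.single_eq_of_ne' (Ne.symm hxρ), add_zero, smul_zero, sub_zero]
      · -- impossible case: coefficient must vanish
        exfalso
        have hvan : ∀ σ ∈ v.support, σ ≠ ρ →
            v σ * toF (indAct k N q B χ i σ) ρ = 0 := by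
          intro σ _ hne
          by_cases hρτ : ρ.1 = tau N i * σ.1
          · exfalso
            apply hD
            have hσ1 : σ.1 = tau N i * ρ.1 := by rw [hρτ, tau_mul_cancel]
            rw [← hσ1]
            exact σ.2
          · rw [indAct_apply_ne q B χ i σ ρ (Ne.symm hne) hρτ, mul_zero]
        have hWρρ : toF (indAct k N q B χ i ρ) ρ = 0 := by
          rw [indAct_zero q B χ i ρ hBtype hD]
          rfl
        have heq := key ρ
        rw [sum_one v.support _ ρ hvan (fun h => absurd hρ h), hWρρ, mul_zero] at heq
        exact hvρ ((mul_eq_zero.mp heq.symm).resolve_left hq)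

end Aux3

/-- for `q ≠ 0` and the induced module `M = H_n(q) ⊗_{H_λ} k(χ)`
with standard basis `{v_σ : σ ∈ D_λ}`, the kernel of `T_i - q` on `M` is spanned
by the elements `v_{τ_iσ} + v_σ` for `σ ∈ A_i(λ)` together with the elements
`v_σ` for `σ ∈ B_i(λ)` with `χ_σ(T_i) = q`. -/
theorem ker_Ti_sub_q_of_induced (q : k) (hq : q ≠ 0) (B : Set (Fin N))
    (χ : Fin N → k) (hχ : IsOneDimRep k N q B χ) (i : Fin N) :
    LinearMap.ker (indT k N q B χ i - q • 1) =
      Submodule.span k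
        ({v : IndM k N B | ∃ (σ : Dset N B) (h : IsDistL N B (tau N i * σ.1)),
            len N σ.1 < len N (tau N i * σ.1) ∧
            v = Finsupp.single ⟨tau N i * σ.1, h⟩ 1 + Finsupp.single σ 1} ∪
         {v : IndM k N B | ∃ (σ : Dset N B) (j : Fin N), j ∈ B ∧
            σ.1⁻¹ * tau N i * σ.1 = tau N j ∧ χ j = q ∧
            v = Finsupp.single σ 1}) := by
  apply le_antisymm
  · intro v hv
    exact ker_le_span_aux q hq B χ i (Finsupp.support v).card v le_rfl
      (LinearMap.mem_ker.mp hv)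
  · rw [Submodule.span_le]
    rintro v hv
    rw [SetLike.mem_coe, LinearMap.mem_ker]
    rcases hv with ⟨σ, h, hlt, rfl⟩ | ⟨σ, j, hj, hconj, hχq, rfl⟩
    · exact genA_ker q B χ i σ h hlt
    · exact genB_ker q B χ i σ hj hconj hχq

end
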